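/- Let n ≥ k ≥ 5 be integers, let G be a graph on n vertices and let v be a vertex of minimum degree d_v = δ(G). If c_v = k·d_v/n ≥ 2, then the number of induced k-cycles of G containing v satisfies D_k(G,v) ≤ (128e/81) · (n/k)^{k−1}. -/

import Mathlib

/-- `D_k(G,v)`: the number of vertex subsets `S` of `G` containing `v` such that the induced
subgraph `G[S]` is isomorphic to the `k`-cycle `C_k`. -/
noncomputable def inducedCycleCountAt {V : Type*} [Fintype V] (G : SimpleGraph V) (k : ℕ)
    (v : V) : ℕ :=
  Set.ncard {S : Finset V | v ∈ S ∧ Nonempty (G.induce (S : Set V) ≃g SimpleGraph.cycleGraph k)}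

namespace ICaux

open Finset
open Fin.NatCast Fin.CommRing

lemma uexp_le_one {u : ℝ} (hu : 0 ≤ u) : u * Real.exp (1 - u) ≤ 1 := by
  have h := Real.add_one_le_exp (u - 1)
  have h2 : u * Real.exp (1 - u) ≤ Real.exp (u - 1) * Real.exp (1 - u) := by
    apply mul_le_mul_of_nonneg_right (by linarith) (Real.exp_nonneg _)
  calc u * Real.exp (1 - u) ≤ Real.exp (u - 1) * Real.exp (1 - u) := h2
    _ = Real.exp 0 := by rw [← Real.exp_add]; ring_nf
    _ = 1 := Real.exp_zero

lemma step_bound (j : ℕ) {b β : ℝ} (hb : 0 ≤ b) (hbβ : b ≤ β) :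
    b * ((β - b) / j) ^ j ≤ (β / (j + 1)) ^ (j + 1) := by
  rcases Nat.eq_zero_or_pos j with hj | hj
  · subst hj; simp; linarith
  rcases eq_or_lt_of_le (hb.trans hbβ) with hβ | hβ
  · have hb0 : b = 0 := le_antisymm (by linarith [hβ]) hb
    rw [hb0, zero_mul]
    positivity
  · -- β > 0
    have hj0 : (j : ℝ) ≠ 0 := by positivity
    have hj1 : (0:ℝ) < j + 1 := by positivity
    set u : ℝ := b * (j + 1) / β with hu
    have hu0 : 0 ≤ u := by positivity
    have hbu : b = u * β / (j + 1) := by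
      rw [eq_div_iff hj1.ne', hu, div_mul_cancel₀ _ hβ.ne']
    have hkey : (β - b) / j = (β / (j + 1)) * (1 + (1 - u) / j) := by
      field_simp [hu]; linear_combination -((eq_div_iff hj1.ne').mp hbu)
    have hbase : 0 ≤ 1 + (1 - u) / j := by
      have h1 : 0 ≤ (β - b) / j := by
        apply div_nonneg (by linarith) (by positivity)
      nlinarith [hkey, div_pos hβ hj1]
    have hP : (0:ℝ) < β / (j + 1) := div_pos hβ hj1
    have hexp : (1 + (1 - u) / j) ^ j ≤ Real.exp (1 - u) := by
      calc (1 + (1 - u) / j) ^ j ≤ (Real.exp ((1 - u) / j)) ^ j := by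
            apply pow_le_pow_left₀ hbase
            linarith [Real.add_one_le_exp ((1 - u) / j)]
        _ = Real.exp ((1 - u) / j * j) := by rw [← Real.exp_nat_mul]; ring_nf
        _ = Real.exp (1 - u) := by rw [div_mul_cancel₀ _ hj0]
    calc b * ((β - b) / j) ^ j = (β / (j+1)) ^ j * (b * (1 + (1 - u) / j) ^ j) := by
          rw [hkey, mul_pow]; ring
      _ ≤ (β / (j+1)) ^ j * (b * Real.exp (1 - u)) := by
          apply mul_le_mul_of_nonneg_left _ (le_of_lt (pow_pos hP j))
          exact mul_le_mul_of_nonneg_left hexp hb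
      _ = (β / (j+1)) ^ j * (β / (j+1)) * (u * Real.exp (1 - u)) := by rw [hbu]; ring
      _ ≤ (β / (j+1)) ^ j * (β / (j+1)) * 1 := by
          apply mul_le_mul_of_nonneg_left (uexp_le_one hu0)
          positivity
      _ = (β / (j + 1)) ^ (j + 1) := by rw [pow_succ]; ring

lemma step_bound2 (j : ℕ) (hj : 1 ≤ j) {M γ : ℝ} (hM : 0 ≤ M) (hMγ : M ≤ γ) :
    M ^ 2 * ((γ - M) / j) ^ j ≤ 4 * (γ / (j + 2)) ^ (j + 2) := by
  rcases eq_or_lt_of_le (hM.trans hMγ) with hγ | hγ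
  · have hM0 : M = 0 := le_antisymm (by linarith) hM
    rw [hM0]
    simp
    positivity
  · have hj0 : (j : ℝ) ≠ 0 := by
      have : (0:ℝ) < j := by exact_mod_cast hj
      positivity
    have hj2 : (0:ℝ) < j + 2 := by positivity
    set u : ℝ := M * (j + 2) / (2 * γ) with hu
    have hu0 : 0 ≤ u := by positivity
    have hbu : M = 2 * γ * u / (j + 2) := by
      rw [eq_div_iff hj2.ne', hu]; field_simp
    have hkey : (γ - M) / j = (γ / (j + 2)) * (1 + 2 * (1 - u) / j) := by
      field_simp [hu]; linear_combination -((eq_div_iff hj2.ne').mp hbu)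
    have hP : (0:ℝ) < γ / (j + 2) := div_pos hγ hj2
    have hbase : 0 ≤ 1 + 2 * (1 - u) / j := by
      have h1 : 0 ≤ (γ - M) / j := by
        apply div_nonneg (by linarith) (by positivity)
      nlinarith [hkey, hP]
    have hexp : (1 + 2 * (1 - u) / j) ^ j ≤ Real.exp (2 * (1 - u)) := by
      calc (1 + 2 * (1 - u) / j) ^ j ≤ (Real.exp (2 * (1 - u) / j)) ^ j := by
            apply pow_le_pow_left₀ hbase
            linarith [Real.add_one_le_exp (2 * (1 - u) / j)]
        _ = Real.exp (2 * (1 - u) / j * j) := by rw [← Real.exp_nat_mul]; ring_nf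
        _ = Real.exp (2 * (1 - u)) := by rw [div_mul_cancel₀ _ hj0]
    have huu : u * Real.exp (1 - u) ≤ 1 := uexp_le_one hu0
    have hsq : (u * Real.exp (1 - u)) ^ 2 ≤ 1 := by
      nlinarith [mul_nonneg hu0 (Real.exp_nonneg (1 - u))]
    have hexp2 : Real.exp (2 * (1 - u)) = (Real.exp (1 - u)) ^ 2 := by
      rw [two_mul, Real.exp_add, sq]
    calc M ^ 2 * ((γ - M) / j) ^ j
        = (γ / (j+2)) ^ j * (M ^ 2 * (1 + 2 * (1 - u) / j) ^ j) := by rw [hkey, mul_pow]; ring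
      _ ≤ (γ / (j+2)) ^ j * (M ^ 2 * Real.exp (2 * (1 - u))) := by
          apply mul_le_mul_of_nonneg_left _ (le_of_lt (pow_pos hP j))
          exact mul_le_mul_of_nonneg_left hexp (by positivity)
      _ = (γ / (j+2)) ^ j * (γ / (j+2)) ^ 2 * 4 * ((u * Real.exp (1 - u)) ^ 2) := by
          rw [hbu, hexp2]; field_simp; ring
      _ ≤ (γ / (j+2)) ^ j * (γ / (j+2)) ^ 2 * 4 * 1 := by
          apply mul_le_mul_of_nonneg_left hsq
          positivity
      _ = 4 * (γ / (j + 2)) ^ (j + 2) := by rw [pow_add]; ring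

lemma mono_bound (m : ℕ) (hm : 1 ≤ m) {a b N : ℝ} (ha : 0 < a) (hab : a ≤ b) (hbN : b ≤ N)
    (hN : N ≤ m * a) : b * (N - b) ^ m ≤ a * (N - a) ^ m := by
  rcases eq_or_lt_of_le hbN with hbN' | hbN'
  · have h0 : N - b = 0 := by linarith
    rw [h0, zero_pow (by omega), mul_zero]
    exact mul_nonneg ha.le (pow_nonneg (by linarith) m)
  · have hNb : (0:ℝ) < N - b := by linarith
    set t : ℝ := (b - a) / (N - b) with ht
    have ht0 : 0 ≤ t := by
      apply div_nonneg (by linarith) (le_of_lt hNb)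
    have hNa : N - a = (N - b) * (1 + t) := by
      rw [ht, mul_add, mul_one, mul_div_assoc', mul_comm (N - b), mul_div_assoc, div_self hNb.ne',
        mul_one]; ring
    have hbern : 1 + (m:ℝ) * t ≤ (1 + t) ^ m := one_add_mul_le_pow (by linarith) m
    have h1 : a * (N - a) ^ m = a * (N - b) ^ m * (1 + t) ^ m := by rw [hNa, mul_pow]; ring
    have h2 : a * (N - b) ^ m * (1 + (m:ℝ) * t) ≤ a * (N - b) ^ m * (1 + t) ^ m := by
      apply mul_le_mul_of_nonneg_left hbern
      positivity
    have h3 : a * m * t ≥ b - a := by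
      rw [ht]
      rw [ge_iff_le, ← sub_nonneg]
      have : a * (m:ℝ) * ((b - a) / (N - b)) - (b - a) = (b - a) * ((a * m - (N - b)) / (N - b)) := by
        field_simp
      rw [this]
      apply mul_nonneg (by linarith)
      apply div_nonneg _ (le_of_lt hNb)
      nlinarith
    have h4 : b * (N - b) ^ m ≤ a * (N - b) ^ m * (1 + (m:ℝ) * t) := by
      have hpow : (0:ℝ) ≤ (N - b) ^ m := by positivity
      have : a * (1 + (m:ℝ) * t) ≥ b := by nlinarith
      nlinarith
    linarith [h1 ▸ h2, h4]


lemma mod_helper {k x : ℕ} (h : x < 2 * k) : x % k = if x < k then x else x - k := by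
  split_ifs with h1
  · exact Nat.mod_eq_of_lt h1
  · rw [Nat.mod_eq_sub_mod (by omega), Nat.mod_eq_of_lt (by omega)]

lemma fin_sub_val {k : ℕ} [NeZero k] (hk : 2 ≤ k) {a b : ℕ} (ha : a < k) (hb : b < k) :
    (((a : Fin k) - (b : Fin k)).val = 1) ↔ (a = b + 1 ∨ (b = k - 1 ∧ a = 0)) := by
  rw [Fin.sub_def]
  simp only [Fin.val_natCast]
  rw [Nat.mod_eq_of_lt ha, Nat.mod_eq_of_lt hb]
  rw [mod_helper (by omega)]
  split_ifs <;> omega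

lemma cycleGraph_adj_natCast {k : ℕ} [NeZero k] (hk : 5 ≤ k) {a b : ℕ} (ha : a < k) (hb : b < k) :
    (SimpleGraph.cycleGraph k).Adj (a : Fin k) (b : Fin k) ↔
      (a = b + 1 ∨ b = a + 1 ∨ (a = 0 ∧ b = k - 1) ∨ (b = 0 ∧ a = k - 1)) := by
  rw [SimpleGraph.cycleGraph_adj']
  rw [fin_sub_val (k:=k) (by omega) ha hb, fin_sub_val (k:=k) (by omega) hb ha]
  omega

lemma cycleGraph_adj_translate {k : ℕ} (hk : 5 ≤ k) (q a b : Fin k) :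
    (SimpleGraph.cycleGraph k).Adj (q + a) (q + b) ↔ (SimpleGraph.cycleGraph k).Adj a b := by
  rw [SimpleGraph.cycleGraph_adj', SimpleGraph.cycleGraph_adj']
  haveI : NeZero k := ⟨by omega⟩
  rw [add_sub_add_left_eq_sub, show q + b - (q + a) = b - a by ring]

lemma cycleGraph_adj_neg {k : ℕ} (hk : 5 ≤ k) (a b : Fin k) :
    (SimpleGraph.cycleGraph k).Adj (-a) (-b) ↔ (SimpleGraph.cycleGraph k).Adj a b := by
  rw [SimpleGraph.cycleGraph_adj', SimpleGraph.cycleGraph_adj']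
  haveI : NeZero k := ⟨by omega⟩
  rw [show -a - -b = b - a by ring, show -b - -a = a - b by ring]
  tauto

lemma neg_one_cast {k : ℕ} [NeZero k] (hk : 5 ≤ k) : ((k - 1 : ℕ) : Fin k) = -1 := by
  have h : ((k - 1 : ℕ) : Fin k) + 1 = 0 := by
    have : ((k - 1 : ℕ) : Fin k) + 1 = ((k - 1 + 1 : ℕ) : Fin k) := by push_cast; ring
    rw [this, show k - 1 + 1 = k by omega, Fin.natCast_self]
  linear_combination h


variable {n : ℕ} (G : SimpleGraph (Fin n)) [DecidableRel G.Adj]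

/-- Induced-path extension counting structure. -/
def gpaths : ℕ → Fin n → Finset (Fin n) → Finset (List (Fin n))
  | 0, _, _ => {[]}
  | (j+1), x, A => (G.neighborFinset x \ A).biUnion
      (fun y => (gpaths j y (A ∪ G.neighborFinset x)).image (y :: ·))

lemma gpaths_card_le (j : ℕ) (x : Fin n) (A : Finset (Fin n)) :
    ((gpaths G j x A).card : ℝ) ≤ (((n : ℝ) - A.card) / j) ^ j := by
  induction j generalizing x A with
  | zero => simp [gpaths]
  | succ j ih =>
    have hcard : (gpaths G (j+1) x A).card ≤
        ∑ y ∈ G.neighborFinset x \ A, (gpaths G j y (A ∪ G.neighborFinset x)).card := by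
      refine le_trans (Finset.card_biUnion_le) (Finset.sum_le_sum fun y _ => ?_)
      exact Finset.card_image_le
    have hA' : (A ∪ G.neighborFinset x).card = A.card + (G.neighborFinset x \ A).card := by
      rw [Finset.union_comm]
      rw [← Finset.card_sdiff_add_card]
      ring
    have hle : (A ∪ G.neighborFinset x).card ≤ n := by
      simpa using Finset.card_le_univ (A ∪ G.neighborFinset x)
    set b : ℕ := (G.neighborFinset x \ A).card with hbdef
    calc ((gpaths G (j+1) x A).card : ℝ)
        ≤ ∑ y ∈ G.neighborFinset x \ A, ((gpaths G j y (A ∪ G.neighborFinset x)).card : ℝ) := by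
          exact_mod_cast hcard
      _ ≤ ∑ _y ∈ G.neighborFinset x \ A, (((n:ℝ) - (A ∪ G.neighborFinset x).card) / j) ^ j :=
          Finset.sum_le_sum fun y _ => ih y _
      _ = (b : ℝ) * ((((n:ℝ) - A.card) - b) / j) ^ j := by
          rw [Finset.sum_const, nsmul_eq_mul]
          congr 2
          rw [hA']
          push_cast
          ring
      _ ≤ (((n:ℝ) - A.card) / ((j:ℝ) + 1)) ^ (j + 1) := by
          apply step_bound j (by positivity)
          have hnat : A.card + b ≤ n := by
            calc A.card + b = (A ∪ G.neighborFinset x).card := hA'.symm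
              _ ≤ n := by simpa using Finset.card_le_univ (A ∪ G.neighborFinset x)
          have h2 : ((A.card + b : ℕ) : ℝ) ≤ (n : ℝ) := by exact_mod_cast hnat
          push_cast at h2
          linarith
      _ = (((n:ℝ) - A.card) / ((j+1 : ℕ) : ℝ)) ^ (j + 1) := by norm_cast

/-- The accumulated forbidden sets along the cycle. -/
def AccF (v : Fin n) (W : ℕ → Fin n) (r : ℕ) : Finset (Fin n) :=
  insert v (G.neighborFinset v) ∪ (Finset.range r).biUnion (fun i => G.neighborFinset (W (i+1)))

lemma AccF_succ (v : Fin n) (W : ℕ → Fin n) (r : ℕ) :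
    AccF G v W (r+1) = AccF G v W r ∪ G.neighborFinset (W (r+1)) := by
  simp only [AccF, Finset.range_add_one, Finset.biUnion_insert, Finset.union_assoc]
  rw [Finset.union_comm (G.neighborFinset (W (r + 1)))]

lemma mid_mem_gpaths {k : ℕ} (hk : 5 ≤ k) (v : Fin n) (W : ℕ → Fin n)
    (hadjW : ∀ a b, a < k → b < k → (G.Adj (W a) (W b) ↔
      (a = b + 1 ∨ b = a + 1 ∨ (a = 0 ∧ b = k - 1) ∨ (b = 0 ∧ a = k - 1))))
    (hW0 : W 0 = v)
    (hWinj : ∀ a b, a < k → b < k → W a = W b → a = b) :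
    ∀ t r, (r + 2) + t = k - 2 →
      (List.ofFn fun j : Fin t => W (r + 3 + (j : ℕ))) ∈
        gpaths G t (W (r + 2)) (AccF G v W (r + 1)) := by
  intro t
  induction t with
  | zero => intro r hr; simp [gpaths]
  | succ t ih =>
    intro r hr
    have hofn : (List.ofFn fun j : Fin (t+1) => W (r + 3 + (j : ℕ)))
        = W (r + 3) :: (List.ofFn fun j : Fin t => W ((r+1) + 3 + (j : ℕ))) := by
      rw [List.ofFn_succ]
      congr 1
      exact congrArg List.ofFn (funext fun j => by
        congr 1
        simp only [Fin.val_succ]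
        omega)
    rw [hofn]
    simp only [gpaths, Finset.mem_biUnion, Finset.mem_image]
    refine ⟨W (r + 3), ?_, (List.ofFn fun j : Fin t => W ((r+1) + 3 + (j : ℕ))), ?_, rfl⟩
    · rw [Finset.mem_sdiff]
      constructor
      · rw [SimpleGraph.mem_neighborFinset]
        rw [hadjW (r+2) (r+3) (by omega) (by omega)]
        omega
      · simp only [AccF, Finset.mem_union, Finset.mem_insert, Finset.mem_biUnion,
          Finset.mem_range, SimpleGraph.mem_neighborFinset, not_or]
        refine ⟨?_, ?_⟩
        · push_neg
          constructor
          · intro h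
            have := hWinj (r+3) 0 (by omega) (by omega) (h.trans hW0.symm)
            omega
          · rw [← hW0, hadjW 0 (r+3) (by omega) (by omega)]
            omega
        · push_neg
          intro i hi
          rw [hadjW (i+1) (r+3) (by omega) (by omega)]
          omega
    · rw [← AccF_succ]
      exact ih (r+1) (by omega)


/-- The superset of encoded induced cycle tuples through `v`. -/
def TT (v : Fin n) (k : ℕ) : Finset (Fin n × Fin n × List (Fin n) × Fin n) :=
  (G.neighborFinset v).biUnion fun x1 =>
    (G.neighborFinset x1 \ insert v (G.neighborFinset v)).biUnion fun x2 =>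
      (gpaths G (k-4) x2 (insert v (G.neighborFinset v) ∪ G.neighborFinset x1)).biUnion fun mid =>
        (G.neighborFinset v \ G.neighborFinset x1).image fun xl => (x1, x2, mid, xl)

lemma TT_card_le {k : ℕ} (hk : 5 ≤ k) (v : Fin n)
    (hmin : G.degree v = G.minDegree) :
    ((TT G v k).card : ℝ) ≤ (G.degree v : ℝ) *
      (4 * (((n : ℝ) - G.degree v) / (((k-4 : ℕ) : ℝ) + 2)) ^ ((k-4) + 2)) := by
  classical
  set d : ℕ := G.degree v with hd
  have key : ∀ x1 ∈ G.neighborFinset v,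
      ((((G.neighborFinset x1 \ insert v (G.neighborFinset v)).biUnion fun x2 =>
      (gpaths G (k-4) x2 (insert v (G.neighborFinset v) ∪ G.neighborFinset x1)).biUnion fun mid =>
        (G.neighborFinset v \ G.neighborFinset x1).image fun xl => (x1, x2, mid, xl)).card : ℝ))
      ≤ 4 * (((n : ℝ) - d) / (((k-4 : ℕ) : ℝ) + 2)) ^ ((k-4) + 2) := by
    intro x1 hx1
    set m : ℕ := (G.neighborFinset x1 \ insert v (G.neighborFinset v)).card with hm
    set A0 : Finset (Fin n) := insert v (G.neighborFinset v) ∪ G.neighborFinset x1 with hA0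
    have hvins : v ∉ G.neighborFinset v := by
      simp [SimpleGraph.mem_neighborFinset]
    have hcardins : (insert v (G.neighborFinset v)).card = d + 1 :=
      Finset.card_insert_of_notMem hvins
    have hA0card : A0.card = d + 1 + m := by
      rw [hA0, Finset.union_comm, ← Finset.card_sdiff_add_card, hcardins, ← hm]
      omega
    have hA0n : A0.card ≤ n := by simpa using Finset.card_le_univ A0
    have hlast : (G.neighborFinset v \ G.neighborFinset x1).card ≤ m + 1 := by
      have h1 : (G.neighborFinset v \ G.neighborFinset x1).card
          + (G.neighborFinset v ∩ G.neighborFinset x1).card = d :=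
        Finset.card_sdiff_add_card_inter _ _
      have h2 : (G.neighborFinset x1 \ G.neighborFinset v).card
          + (G.neighborFinset x1 ∩ G.neighborFinset v).card = G.degree x1 :=
        Finset.card_sdiff_add_card_inter _ _
      have h3 : d ≤ G.degree x1 := hmin.le.trans (G.minDegree_le_degree x1)
      have h4 : (G.neighborFinset x1 ∩ G.neighborFinset v).card
          = (G.neighborFinset v ∩ G.neighborFinset x1).card := by rw [Finset.inter_comm]
      have h5 : G.neighborFinset x1 \ G.neighborFinset v
          ⊆ insert v (G.neighborFinset x1 \ insert v (G.neighborFinset v)) := by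
        intro y hy
        simp only [Finset.mem_sdiff, Finset.mem_insert] at hy ⊢
        by_cases hyv : y = v
        · exact Or.inl hyv
        · exact Or.inr ⟨hy.1, by tauto⟩
      have h6 : (G.neighborFinset x1 \ G.neighborFinset v).card ≤ m + 1 := by
        calc (G.neighborFinset x1 \ G.neighborFinset v).card
            ≤ (insert v (G.neighborFinset x1 \ insert v (G.neighborFinset v))).card :=
              Finset.card_le_card h5
          _ ≤ m + 1 := by rw [hm]; exact Finset.card_insert_le _ _
      omega
    set P : ℝ := (((n : ℝ) - A0.card) / ((k-4 : ℕ) : ℝ)) ^ (k-4) with hP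
    have hPnonneg : 0 ≤ P := by
      rw [hP]
      apply pow_nonneg
      apply div_nonneg _ (by positivity)
      have : (A0.card : ℝ) ≤ n := by exact_mod_cast hA0n
      linarith
    have hinner : ∀ x2 ∈ G.neighborFinset x1 \ insert v (G.neighborFinset v),
        ((((gpaths G (k-4) x2 A0).biUnion fun mid =>
          (G.neighborFinset v \ G.neighborFinset x1).image fun xl => (x1, x2, mid, xl)).card : ℝ))
        ≤ P * (m + 1) := by
      intro x2 _
      have hn1 : (((gpaths G (k-4) x2 A0).biUnion fun mid =>
          (G.neighborFinset v \ G.neighborFinset x1).image fun xl => (x1, x2, mid, xl)).card : ℕ)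
          ≤ (gpaths G (k-4) x2 A0).card * (m + 1) := by
        calc _ ≤ ∑ mid ∈ gpaths G (k-4) x2 A0,
              ((G.neighborFinset v \ G.neighborFinset x1).image fun xl => (x1, x2, mid, xl)).card :=
            Finset.card_biUnion_le
          _ ≤ ∑ _mid ∈ gpaths G (k-4) x2 A0, (m + 1) :=
            Finset.sum_le_sum fun mid _ => le_trans Finset.card_image_le hlast
          _ = (gpaths G (k-4) x2 A0).card * (m + 1) := by
            rw [Finset.sum_const, smul_eq_mul]
      calc ((((gpaths G (k-4) x2 A0).biUnion fun mid =>
          (G.neighborFinset v \ G.neighborFinset x1).image fun xl => (x1, x2, mid, xl)).card : ℝ))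
          ≤ ((gpaths G (k-4) x2 A0).card : ℝ) * ((m : ℝ) + 1) := by exact_mod_cast hn1
        _ ≤ P * (m + 1) := by
            apply mul_le_mul_of_nonneg_right _ (by positivity)
            exact gpaths_card_le G (k-4) x2 A0
    have houter : ((((G.neighborFinset x1 \ insert v (G.neighborFinset v)).biUnion fun x2 =>
      (gpaths G (k-4) x2 A0).biUnion fun mid =>
        (G.neighborFinset v \ G.neighborFinset x1).image fun xl => (x1, x2, mid, xl)).card : ℝ))
        ≤ (m : ℝ) * (P * (m+1)) := by
      have h0 : (((G.neighborFinset x1 \ insert v (G.neighborFinset v)).biUnion fun x2 =>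
        (gpaths G (k-4) x2 A0).biUnion fun mid =>
          (G.neighborFinset v \ G.neighborFinset x1).image fun xl => (x1, x2, mid, xl)).card : ℕ)
          ≤ ∑ x2 ∈ G.neighborFinset x1 \ insert v (G.neighborFinset v),
            (((gpaths G (k-4) x2 A0).biUnion fun mid =>
            (G.neighborFinset v \ G.neighborFinset x1).image fun xl => (x1, x2, mid, xl)).card : ℕ) :=
        Finset.card_biUnion_le
      calc _ ≤ ((∑ x2 ∈ G.neighborFinset x1 \ insert v (G.neighborFinset v),
            (((gpaths G (k-4) x2 A0).biUnion fun mid =>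
            (G.neighborFinset v \ G.neighborFinset x1).image fun xl => (x1, x2, mid, xl)).card : ℕ) : ℕ) : ℝ) := by
            exact_mod_cast h0
        _ ≤ ∑ x2 ∈ G.neighborFinset x1 \ insert v (G.neighborFinset v), (P * (m+1)) := by
            rw [Nat.cast_sum]
            exact Finset.sum_le_sum hinner
        _ = (m : ℝ) * (P * (m+1)) := by
            rw [Finset.sum_const, nsmul_eq_mul, ← hm]
    refine le_trans houter ?_
    -- real analysis step
    have hMγ : (m : ℝ) + 1 ≤ (n : ℝ) - d := by
      have : (A0.card : ℝ) ≤ n := by exact_mod_cast hA0n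
      rw [hA0card] at this
      push_cast at this
      linarith
    have hexp : ((n : ℝ) - A0.card) = ((n : ℝ) - d) - ((m:ℝ)+1) := by
      rw [hA0card]; push_cast; ring
    have hfin : (m : ℝ) * (P * (m+1)) ≤ ((m:ℝ)+1)^2 * P := by
      nlinarith [hPnonneg]
    refine le_trans hfin ?_
    rw [hP, hexp]
    exact step_bound2 (k-4) (by omega) (by positivity) hMγ
  -- sum over x1
  have h0 : ((TT G v k).card : ℕ) ≤ ∑ x1 ∈ G.neighborFinset v,
      (((G.neighborFinset x1 \ insert v (G.neighborFinset v)).biUnion fun x2 =>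
      (gpaths G (k-4) x2 (insert v (G.neighborFinset v) ∪ G.neighborFinset x1)).biUnion fun mid =>
        (G.neighborFinset v \ G.neighborFinset x1).image fun xl => (x1, x2, mid, xl)).card : ℕ) :=
    Finset.card_biUnion_le
  calc ((TT G v k).card : ℝ) ≤ ∑ x1 ∈ G.neighborFinset v,
      ((((G.neighborFinset x1 \ insert v (G.neighborFinset v)).biUnion fun x2 =>
      (gpaths G (k-4) x2 (insert v (G.neighborFinset v) ∪ G.neighborFinset x1)).biUnion fun mid =>
        (G.neighborFinset v \ G.neighborFinset x1).image fun xl => (x1, x2, mid, xl)).card : ℝ)) := by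
        exact_mod_cast h0
    _ ≤ ∑ _x1 ∈ G.neighborFinset v,
        (4 * (((n : ℝ) - d) / (((k-4 : ℕ) : ℝ) + 2)) ^ ((k-4) + 2)) :=
        Finset.sum_le_sum key
    _ = (G.degree v : ℝ) * (4 * (((n : ℝ) - d) / (((k-4 : ℕ) : ℝ) + 2)) ^ ((k-4) + 2)) := by
        rw [Finset.sum_const, nsmul_eq_mul]
        rfl


/-- Encoded tuple of a cycle trace lies in `TT`. -/
lemma tuple_mem_TT {k : ℕ} (hk : 5 ≤ k) (v : Fin n) (W : ℕ → Fin n)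
    (hadjW : ∀ a b, a < k → b < k → (G.Adj (W a) (W b) ↔
      (a = b + 1 ∨ b = a + 1 ∨ (a = 0 ∧ b = k - 1) ∨ (b = 0 ∧ a = k - 1))))
    (hW0 : W 0 = v)
    (hWinj : ∀ a b, a < k → b < k → W a = W b → a = b) :
    (W 1, W 2, List.ofFn (fun j : Fin (k-4) => W (3 + (j:ℕ))), W (k-1)) ∈ TT G v k := by
  have h1 : W 1 ∈ G.neighborFinset v := by
    rw [SimpleGraph.mem_neighborFinset, ← hW0, hadjW 0 1 (by omega) (by omega)]
    omega
  have h2 : W 2 ∈ G.neighborFinset (W 1) \ insert v (G.neighborFinset v) := by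
    rw [Finset.mem_sdiff, SimpleGraph.mem_neighborFinset, hadjW 1 2 (by omega) (by omega)]
    refine ⟨by omega, ?_⟩
    simp only [Finset.mem_insert, SimpleGraph.mem_neighborFinset, not_or]
    constructor
    · intro h
      have := hWinj 2 0 (by omega) (by omega) (h.trans hW0.symm)
      omega
    · rw [← hW0, hadjW 0 2 (by omega) (by omega)]
      omega
  have hxl : W (k-1) ∈ G.neighborFinset v \ G.neighborFinset (W 1) := by
    rw [Finset.mem_sdiff, SimpleGraph.mem_neighborFinset, SimpleGraph.mem_neighborFinset,
      ← hW0, hadjW 0 (k-1) (by omega) (by omega), hadjW 1 (k-1) (by omega) (by omega)]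
    omega
  have hmid : (List.ofFn fun j : Fin (k-4) => W (3 + (j : ℕ))) ∈
      gpaths G (k-4) (W 2) (insert v (G.neighborFinset v) ∪ G.neighborFinset (W 1)) := by
    have hAcc : AccF G v W 1 = insert v (G.neighborFinset v) ∪ G.neighborFinset (W 1) := by
      simp [AccF]
    have := mid_mem_gpaths G hk v W hadjW hW0 hWinj (k-4) 0 (by omega)
    rw [hAcc] at this
    have heq : (List.ofFn fun j : Fin (k-4) => W (0 + 3 + (j : ℕ)))
        = (List.ofFn fun j : Fin (k-4) => W (3 + (j : ℕ))) := by
      exact congrArg List.ofFn (funext fun j => by norm_num)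
    rwa [heq] at this
  simp only [TT, Finset.mem_biUnion, Finset.mem_image]
  exact ⟨W 1, h1, W 2, h2, _, hmid, W (k-1), hxl, rfl⟩

/-- Recovery of `S` from the encoded tuple. -/
lemma recov_eq {k : ℕ} (hk : 5 ≤ k) (v : Fin n) (S : Finset (Fin n)) (hv : v ∈ S)
    (W : ℕ → Fin n) (hW0 : W 0 = v)
    (hmem : ∀ m, m < k → W m ∈ S)
    (hsurj : ∀ u ∈ S, ∃ m, m < k ∧ W m = u) :
    insert v (insert (W 1) (insert (W 2) (insert (W (k-1))
      (List.ofFn fun j : Fin (k-4) => W (3 + (j:ℕ))).toFinset))) = S := by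
  apply Finset.ext
  intro u
  simp only [Finset.mem_insert, List.mem_toFinset, List.mem_ofFn]
  constructor
  · rintro (rfl | rfl | rfl | rfl | ⟨j, rfl⟩)
    · exact hv
    · exact hmem 1 (by omega)
    · exact hmem 2 (by omega)
    · exact hmem (k-1) (by omega)
    · exact hmem _ (by omega)
  · intro hu
    obtain ⟨m, hm, rfl⟩ := hsurj u hu
    rcases (by omega : m = 0 ∨ m = 1 ∨ m = 2 ∨ m = k - 1 ∨ (3 ≤ m ∧ m ≤ k - 2)) with
      h | h | h | h | h
    · subst h; exact Or.inl hW0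
    · subst h; exact Or.inr (Or.inl rfl)
    · subst h; exact Or.inr (Or.inr (Or.inl rfl))
    · subst h; exact Or.inr (Or.inr (Or.inr (Or.inl rfl)))
    · refine Or.inr (Or.inr (Or.inr (Or.inr ⟨⟨m - 3, by omega⟩, ?_⟩)))
      exact congrArg W (by omega : 3 + (m - 3) = m)

/-- recovery map -/
def recov (v : Fin n) (t : Fin n × Fin n × List (Fin n) × Fin n) : Finset (Fin n) :=
  insert v (insert t.1 (insert t.2.1 (insert t.2.2.2 t.2.2.1.toFinset)))

lemma exists_tuple {k : ℕ} (hk : 5 ≤ k) (v : Fin n) (S : Finset (Fin n)) (hv : v ∈ S)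
    (he : Nonempty (G.induce (S : Set (Fin n)) ≃g SimpleGraph.cycleGraph k)) :
    (∃ t ∈ TT G v k, t.1 < t.2.2.2 ∧ recov v t = S) ∧
      (∃ t ∈ TT G v k, t.2.2.2 < t.1 ∧ recov v t = S) := by
  classical
  haveI : NeZero k := ⟨by omega⟩
  obtain ⟨e⟩ := he
  have hvS : v ∈ (S : Set (Fin n)) := by exact_mod_cast hv
  set p : Fin k := e ⟨v, hvS⟩ with hp
  set ws : Bool → Fin k → Fin n :=
    fun s i => ((e.symm (p + (if s then i else -i))) : Fin n) with hws
  have hmemS : ∀ X : Fin k, ((e.symm X : Fin n)) ∈ S := by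
    intro X
    have := (e.symm X).2
    exact_mod_cast this
  have hadj_e : ∀ X Y : Fin k,
      (G.Adj (e.symm X : Fin n) (e.symm Y : Fin n)) ↔ (SimpleGraph.cycleGraph k).Adj X Y := by
    intro X Y
    rw [← e.symm.map_adj_iff]
    rfl
  have hadjws : ∀ s a b, G.Adj (ws s a) (ws s b) ↔ (SimpleGraph.cycleGraph k).Adj a b := by
    intro s a b
    rw [hws]
    simp only []
    rw [hadj_e, cycleGraph_adj_translate hk]
    cases s
    · simp only [Bool.false_eq_true, if_false]
      exact cycleGraph_adj_neg hk a b
    · simp only [if_true]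
  have hwsinj : ∀ s, Function.Injective (ws s) := by
    intro s a b h
    rw [hws] at h
    simp only [] at h
    have h2 := e.symm.injective (Subtype.coe_injective h)
    have h3 := add_left_cancel h2
    cases s
    · simpa using neg_injective (by simpa using h3)
    · simpa using h3
  have hws0 : ∀ s, ws s 0 = v := by
    intro s
    rw [hws]
    cases s <;> simp [hp]
  have hwssurj : ∀ s, ∀ u ∈ S, ∃ i, ws s i = u := by
    intro s u hu
    have huS : u ∈ (S : Set (Fin n)) := by exact_mod_cast hu
    refine ⟨if s then e ⟨u, huS⟩ - p else p - e ⟨u, huS⟩, ?_⟩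
    rw [hws]
    cases s <;> simp
  set W : Bool → ℕ → Fin n := fun s m => ws s ((m : ℕ) : Fin k) with hW
  have hWadj : ∀ s a b, a < k → b < k → (G.Adj (W s a) (W s b) ↔
      (a = b + 1 ∨ b = a + 1 ∨ (a = 0 ∧ b = k - 1) ∨ (b = 0 ∧ a = k - 1))) := by
    intro s a b ha hb
    rw [hW]
    simp only []
    rw [hadjws, cycleGraph_adj_natCast hk ha hb]
  have hWinj : ∀ s a b, a < k → b < k → W s a = W s b → a = b := by
    intro s a b ha hb h
    have := hwsinj s h
    have h2 : (a : Fin k).val = (b : Fin k).val := by rw [this]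
    rwa [Fin.val_cast_of_lt ha, Fin.val_cast_of_lt hb] at h2
  have hW0 : ∀ s, W s 0 = v := by
    intro s
    rw [hW]
    simp only [Nat.cast_zero]
    exact hws0 s
  have hWmem : ∀ s m, m < k → W s m ∈ S := fun s m _ => hmemS _
  have hWsurj : ∀ s, ∀ u ∈ S, ∃ m, m < k ∧ W s m = u := by
    intro s u hu
    obtain ⟨i, hi⟩ := hwssurj s u hu
    refine ⟨i.val, i.isLt, ?_⟩
    rw [hW]
    simp only [Fin.cast_val_eq_self]
    exact hi
  have hTT : ∀ s, (W s 1, W s 2, List.ofFn (fun j : Fin (k-4) => W s (3 + (j:ℕ))), W s (k-1))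
      ∈ TT G v k := fun s =>
    tuple_mem_TT G hk v (W s) (hWadj s) (hW0 s) (hWinj s)
  have hrecov : ∀ s, recov v (W s 1, W s 2,
      List.ofFn (fun j : Fin (k-4) => W s (3 + (j:ℕ))), W s (k-1)) = S := by
    intro s
    exact recov_eq hk v S hv (W s) (hW0 s) (hWmem s) (hWsurj s)
  have hcast1 : ((1 : ℕ) : Fin k) = 1 := Nat.cast_one
  have hcastk1 : ((k - 1 : ℕ) : Fin k) = -1 := neg_one_cast hk
  have hcross1 : W false 1 = W true (k-1) := by
    show (ws false ((1:ℕ):Fin k)) = ws true ((k-1 : ℕ) : Fin k)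
    rw [hcast1, hcastk1]
    rfl
  have hcross2 : W false (k-1) = W true 1 := by
    show (ws false ((k-1:ℕ):Fin k)) = ws true ((1 : ℕ) : Fin k)
    rw [hcast1, hcastk1]
    show (↑(e.symm (p + - -1)) : Fin n) = (↑(e.symm (p + 1)) : Fin n)
    rw [neg_neg]
  have hne : W true 1 ≠ W true (k-1) := by
    intro h
    have := hWinj true 1 (k-1) (by omega) (by omega) h
    omega
  rcases lt_or_gt_of_ne hne with hlt | hgt
  · exact ⟨⟨_, hTT true, hlt, hrecov true⟩,
      ⟨_, hTT false, by simpa [hcross1, hcross2] using hlt, hrecov false⟩⟩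
  · exact ⟨⟨_, hTT false, by simpa [hcross1, hcross2] using hgt, hrecov false⟩,
      ⟨_, hTT true, hgt, hrecov true⟩⟩


set_option maxHeartbeats 1000000 in
theorem cycleCountAt_le_of_minDegree_large (n k : ℕ) (hk : 5 ≤ k) (hkn : k ≤ n)
    (G : SimpleGraph (Fin n)) [DecidableRel G.Adj] (v : Fin n)
    (hmin : G.degree v = G.minDegree)
    (hc : 2 ≤ (k : ℝ) * (G.degree v : ℝ) / (n : ℝ)) :
    (inducedCycleCountAt G k v : ℝ) ≤
      128 * Real.exp 1 / 81 * ((n : ℝ) / (k : ℝ)) ^ (k - 1) := by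
  classical
  set 𝒮 : Set (Finset (Fin n)) :=
    {S : Finset (Fin n) | v ∈ S ∧ Nonempty (G.induce (S : Set (Fin n)) ≃g SimpleGraph.cycleGraph k)}
    with h𝒮
  have hDdef : inducedCycleCountAt G k v = 𝒮.ncard := rfl
  set T1 : Finset (Fin n × Fin n × List (Fin n) × Fin n) :=
    (TT G v k).filter (fun t => t.1 < t.2.2.2) with hT1
  set T2 : Finset (Fin n × Fin n × List (Fin n) × Fin n) :=
    (TT G v k).filter (fun t => t.2.2.2 < t.1) with hT2
  have hinj1 : 𝒮.ncard ≤ T1.card := by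
    rw [← Set.ncard_coe_finset]
    set f : Finset (Fin n) → Fin n × Fin n × List (Fin n) × Fin n :=
      fun S => if h : S ∈ 𝒮 then (exists_tuple G hk v S h.1 h.2).1.choose else (v, v, [], v)
      with hf
    apply Set.ncard_le_ncard_of_injOn f
    · intro S hS
      rw [hf]
      simp only [dif_pos hS]
      obtain ⟨ht, hlt, _⟩ := (exists_tuple G hk v S hS.1 hS.2).1.choose_spec
      exact Finset.mem_coe.mpr (Finset.mem_filter.mpr ⟨ht, hlt⟩)
    · intro S1 h1 S2 h2 heq
      have r1 : recov v (f S1) = S1 := by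
        rw [hf]; simp only [dif_pos h1]
        exact (exists_tuple G hk v S1 h1.1 h1.2).1.choose_spec.2.2
      have r2 : recov v (f S2) = S2 := by
        rw [hf]; simp only [dif_pos h2]
        exact (exists_tuple G hk v S2 h2.1 h2.2).1.choose_spec.2.2
      rw [← r1, ← r2, heq]
  have hinj2 : 𝒮.ncard ≤ T2.card := by
    rw [← Set.ncard_coe_finset]
    set f : Finset (Fin n) → Fin n × Fin n × List (Fin n) × Fin n :=
      fun S => if h : S ∈ 𝒮 then (exists_tuple G hk v S h.1 h.2).2.choose else (v, v, [], v)
      with hf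
    apply Set.ncard_le_ncard_of_injOn f
    · intro S hS
      rw [hf]
      simp only [dif_pos hS]
      obtain ⟨ht, hlt, _⟩ := (exists_tuple G hk v S hS.1 hS.2).2.choose_spec
      exact Finset.mem_coe.mpr (Finset.mem_filter.mpr ⟨ht, hlt⟩)
    · intro S1 h1 S2 h2 heq
      have r1 : recov v (f S1) = S1 := by
        rw [hf]; simp only [dif_pos h1]
        exact (exists_tuple G hk v S1 h1.1 h1.2).2.choose_spec.2.2
      have r2 : recov v (f S2) = S2 := by
        rw [hf]; simp only [dif_pos h2]
        exact (exists_tuple G hk v S2 h2.1 h2.2).2.choose_spec.2.2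
      rw [← r1, ← r2, heq]
  have hdisj : Disjoint T1 T2 := by
    rw [Finset.disjoint_left]
    intro t ht1 ht2
    rw [hT1, Finset.mem_filter] at ht1
    rw [hT2, Finset.mem_filter] at ht2
    exact absurd ht2.2 (lt_asymm ht1.2)
  have hunion : T1.card + T2.card ≤ (TT G v k).card := by
    rw [← Finset.card_union_of_disjoint hdisj]
    apply Finset.card_le_card
    exact Finset.union_subset (Finset.filter_subset _ _) (Finset.filter_subset _ _)
  have h2D : 2 * 𝒮.ncard ≤ (TT G v k).card := by omega
  -- real part
  have hTTle := TT_card_le G hk v hmin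
  set d : ℕ := G.degree v with hd
  have hn5 : 5 ≤ n := le_trans hk hkn
  have hn0 : (0:ℝ) < n := by
    have : (0:ℕ) < n := by omega
    exact_mod_cast this
  have hk0 : (0:ℝ) < k := by
    have : (0:ℕ) < k := by omega
    exact_mod_cast this
  have hkR : (5:ℝ) ≤ k := by exact_mod_cast hk
  have hdn : (d:ℝ) ≤ n := by
    have h1 : (G.neighborFinset v).card ≤ Fintype.card (Fin n) := Finset.card_le_univ _
    rw [Fintype.card_fin] at h1
    have h2 : d ≤ n := h1
    exact_mod_cast h2
  have hab : 2*(n:ℝ)/k ≤ d := by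
    have h1 : 2*(n:ℝ) ≤ k*d := by
      rw [le_div_iff₀ hn0] at hc
      linarith
    rw [div_le_iff₀ hk0]
    linarith
  have ha : (0:ℝ) < 2*n/k := by positivity
  set m : ℕ := (k-4) + 2 with hm
  set c : ℝ := ((k-4 : ℕ) : ℝ) + 2 with hcdef
  have hcval : c = (k:ℝ) - 2 := by
    rw [hcdef, Nat.cast_sub (by omega : 4 ≤ k)]
    push_cast
    ring
  have hc0 : (0:ℝ) < c := by rw [hcval]; linarith
  have hmcast : ((m:ℕ):ℝ) = c := by
    rw [hm, hcdef]
    push_cast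
    ring
  have hN : (n:ℝ) ≤ (m:ℝ) * (2*n/k) := by
    rw [hmcast, hcval]
    have hre : ((k:ℝ)-2) * (2*n/k) = (2*(n:ℝ)*((k:ℝ)-2))/k := by ring
    rw [hre, le_div_iff₀ hk0]
    nlinarith [mul_nonneg hn0.le (by linarith : (0:ℝ) ≤ (k:ℝ) - 4)]
  have hmono := mono_bound m (by omega) ha hab hdn hN
  have hcast2D : 2*(𝒮.ncard:ℝ) ≤ ((TT G v k).card : ℝ) := by exact_mod_cast h2D
  have hkey : ((n:ℝ) - 2*n/k)/c = n/k := by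
    rw [hcval, div_eq_div_iff (ne_of_gt (by linarith : (0:ℝ) < (k:ℝ)-2)) (ne_of_gt hk0)]
    field_simp
  have hcm : (0:ℝ) < c ^ m := pow_pos hc0 m
  rw [hDdef]
  calc (𝒮.ncard : ℝ) ≤ ((d:ℝ) * (4 * (((n : ℝ) - d) / c) ^ m))/2 := by
        linarith [hTTle, hcast2D]
    _ = 2 * ((d:ℝ) * ((n:ℝ) - d)^m) / c^m := by rw [div_pow]; ring
    _ ≤ 2 * ((2*(n:ℝ)/k) * ((n:ℝ) - 2*n/k)^m) / c^m :=
        div_le_div_of_nonneg_right (by linarith [hmono]) hcm.le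
    _ = 4 * (n/k) * (((n:ℝ) - 2*n/k)/c)^m := by rw [div_pow]; ring
    _ = 4 * ((n:ℝ)/k) ^ (k-1) := by
        rw [hkey, show k - 1 = m + 1 by omega, pow_succ]
        ring
    _ ≤ 128 * Real.exp 1 / 81 * ((n : ℝ) / (k : ℝ)) ^ (k - 1) := by
        apply mul_le_mul_of_nonneg_right _ (by positivity)
        nlinarith [Real.exp_one_gt_d9]


end ICaux

/-- For `n ≥ k ≥ 5`, a graph `G` on `n` vertices and a vertex `v` of minimum degree
`d_v = δ(G)`, if `c_v = k·d_v/n ≥ 2` then `D_k(G,v) ≤ (128e/81)·(n/k)^(k-1)`. -/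
theorem cycleCountAt_le_of_minDegree_large (n k : ℕ) (hk : 5 ≤ k) (hkn : k ≤ n)
    (G : SimpleGraph (Fin n)) [DecidableRel G.Adj] (v : Fin n)
    (hmin : G.degree v = G.minDegree)
    (hc : 2 ≤ (k : ℝ) * (G.degree v : ℝ) / (n : ℝ)) :
    (inducedCycleCountAt G k v : ℝ) ≤
      128 * Real.exp 1 / 81 * ((n : ℝ) / (k : ℝ)) ^ (k - 1) :=
  ICaux.cycleCountAt_le_of_minDegree_large n k hk hkn G v hmin hc
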